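/- For all real b ≥ b' > e and every ε ∈ (0, 1/2), the integral K⁻(ε; b, b') = ∫₁^∞ ε²t²(1 − e^{−εt}) / (√(1+t²)(ε²t² + b²)(ε²t² + b'²)) dt satisfies |K⁻(ε;b,b') − C₀⁻(b,b')| ≤ C ε² (log b − log b' + b'^{−2})/(b² − b'²) for an absolute constant C, where C₀⁻(b,b') = ∫₀^∞ t(1 − e^{−t})/((t²+b²)(t²+b'²)) dt and for b = b' the factor (log b − log b')/(b² − b'²) is interpreted as 1/(2b²). -/

import Mathlib

open Real MeasureTheory Set

private lemma aux_exp1 (s : ℝ) : 1 - Real.exp (-s) ≤ s := by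
  have := Real.add_one_le_exp (-s); linarith

private lemma aux_exp0 {s : ℝ} (hs : 0 ≤ s) : 0 ≤ 1 - Real.exp (-s) := by
  have : Real.exp (-s) ≤ Real.exp 0 := Real.exp_le_exp.mpr (by linarith)
  simpa [Real.exp_zero] using this

private lemma aux_sqrt_ge {ε s : ℝ} (hs : 0 ≤ s) : s ≤ Real.sqrt (ε ^ 2 + s ^ 2) := by
  have h1 : Real.sqrt (s ^ 2) ≤ Real.sqrt (ε ^ 2 + s ^ 2) :=
    Real.sqrt_le_sqrt (by nlinarith)
  rwa [Real.sqrt_sq hs] at h1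

private lemma aux_h_nonneg {b b' s : ℝ} (hb : 0 < b) (hb' : 0 < b') (hs : 0 ≤ s) :
    0 ≤ s * (1 - Real.exp (-s)) / ((s ^ 2 + b ^ 2) * (s ^ 2 + b' ^ 2)) :=
  div_nonneg (mul_nonneg hs (aux_exp0 hs)) (by positivity)

private lemma aux_h_le {b b' s : ℝ} (hb : 1 ≤ b) (hb' : 1 ≤ b') (hs : 0 < s) :
    s * (1 - Real.exp (-s)) / ((s ^ 2 + b ^ 2) * (s ^ 2 + b' ^ 2)) ≤ (1 + s ^ 2)⁻¹ := by
  rw [inv_eq_one_div, div_le_div_iff₀ (by positivity) (by positivity)]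
  have hE := aux_exp0 hs.le
  have hE1 := aux_exp1 s
  have hb2 : (1:ℝ) ≤ b ^ 2 := by nlinarith
  have hb'2 : (1:ℝ) ≤ b' ^ 2 := by nlinarith
  have t1 : s * (1 - Real.exp (-s)) ≤ s ^ 2 := by nlinarith
  have t2 : s * (1 - Real.exp (-s)) * (1 + s ^ 2) ≤ s ^ 2 * (1 + s ^ 2) :=
    mul_le_mul_of_nonneg_right t1 (by positivity)
  nlinarith [t2, sq_nonneg s, sq_nonneg (s * s)]

private lemma aux_g_nonneg {b b' ε s : ℝ} (hb : 0 < b) (hb' : 0 < b') (hε : 0 < ε) (hs : 0 ≤ s) :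
    0 ≤ s ^ 2 * (1 - Real.exp (-s)) /
      (Real.sqrt (ε ^ 2 + s ^ 2) * (s ^ 2 + b ^ 2) * (s ^ 2 + b' ^ 2)) := by
  have hr : (0:ℝ) < Real.sqrt (ε ^ 2 + s ^ 2) := Real.sqrt_pos.mpr (by positivity)
  exact div_nonneg (mul_nonneg (sq_nonneg s) (aux_exp0 hs)) (by positivity)

private lemma aux_g_le_h {b b' ε s : ℝ} (hb : 0 < b) (hb' : 0 < b') (hε : 0 < ε) (hs : 0 < s) :
    s ^ 2 * (1 - Real.exp (-s)) /
      (Real.sqrt (ε ^ 2 + s ^ 2) * (s ^ 2 + b ^ 2) * (s ^ 2 + b' ^ 2)) ≤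
    s * (1 - Real.exp (-s)) / ((s ^ 2 + b ^ 2) * (s ^ 2 + b' ^ 2)) := by
  have hr0 : (0:ℝ) < Real.sqrt (ε ^ 2 + s ^ 2) := Real.sqrt_pos.mpr (by positivity)
  have hrs : s ≤ Real.sqrt (ε ^ 2 + s ^ 2) := aux_sqrt_ge hs.le
  set r := Real.sqrt (ε ^ 2 + s ^ 2) with hrdef
  clear_value r
  rw [div_le_div_iff₀ (by positivity) (by positivity)]
  have hE := aux_exp0 hs.le
  have hAB : (0:ℝ) ≤ (s ^ 2 + b ^ 2) * (s ^ 2 + b' ^ 2) := by positivity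
  nlinarith [mul_le_mul_of_nonneg_right (mul_le_mul_of_nonneg_left hrs hs.le)
    (mul_nonneg hE hAB)]

private lemma aux_diff_le {b b' ε s : ℝ} (hb : 1 ≤ b) (hb' : 1 ≤ b') (hε : 0 < ε) (hs : ε < s) :
    s * (1 - Real.exp (-s)) / ((s ^ 2 + b ^ 2) * (s ^ 2 + b' ^ 2)) -
      s ^ 2 * (1 - Real.exp (-s)) /
        (Real.sqrt (ε ^ 2 + s ^ 2) * (s ^ 2 + b ^ 2) * (s ^ 2 + b' ^ 2)) ≤
    ε ^ 2 / (2 * b' ^ 2) * (1 + s ^ 2)⁻¹ := by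
  have hs0 : (0:ℝ) < s := lt_trans hε hs
  have hb0 : (0:ℝ) < b := by linarith
  have hb'0 : (0:ℝ) < b' := by linarith
  have hr0 : (0:ℝ) < Real.sqrt (ε ^ 2 + s ^ 2) := Real.sqrt_pos.mpr (by positivity)
  have hr2 : (Real.sqrt (ε ^ 2 + s ^ 2)) ^ 2 = ε ^ 2 + s ^ 2 := Real.sq_sqrt (by positivity)
  have hrs : s ≤ Real.sqrt (ε ^ 2 + s ^ 2) := aux_sqrt_ge hs0.le
  set r := Real.sqrt (ε ^ 2 + s ^ 2) with hrdef
  clear_value r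
  have hA : (0:ℝ) < s ^ 2 + b ^ 2 := by positivity
  have hB : (0:ℝ) < s ^ 2 + b' ^ 2 := by positivity
  have heq : s * (1 - Real.exp (-s)) / ((s ^ 2 + b ^ 2) * (s ^ 2 + b' ^ 2)) -
      s ^ 2 * (1 - Real.exp (-s)) / (r * (s ^ 2 + b ^ 2) * (s ^ 2 + b' ^ 2))
      = (1 - Real.exp (-s)) * s * (r - s) / (r * (s ^ 2 + b ^ 2) * (s ^ 2 + b' ^ 2)) := by
    field_simp
  rw [heq]
  have hE := aux_exp0 hs0.le
  have hE1 := aux_exp1 s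
  have key : s * (r - s) ≤ ε ^ 2 / 2 := by nlinarith [sq_nonneg (r - s)]
  have hnum : (1 - Real.exp (-s)) * s * (r - s) ≤ s * (ε ^ 2 / 2) := by
    have h1 : (1 - Real.exp (-s)) * (s * (r - s)) ≤ s * (ε ^ 2 / 2) :=
      mul_le_mul hE1 key (mul_nonneg hs0.le (by linarith)) hs0.le
    nlinarith [h1]
  have hden : s * ((1 + s ^ 2) * b' ^ 2) ≤ r * (s ^ 2 + b ^ 2) * (s ^ 2 + b' ^ 2) := by
    have hb2 : (1:ℝ) ≤ b ^ 2 := by nlinarith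
    have h1 : (1 + s ^ 2) * b' ^ 2 ≤ (s ^ 2 + b ^ 2) * (s ^ 2 + b' ^ 2) := by
      nlinarith [sq_nonneg s, sq_nonneg (s * b)]
    have h2 : s * ((1 + s ^ 2) * b' ^ 2) ≤ r * ((s ^ 2 + b ^ 2) * (s ^ 2 + b' ^ 2)) :=
      mul_le_mul hrs h1 (by positivity) hr0.le
    nlinarith [h2]
  calc (1 - Real.exp (-s)) * s * (r - s) / (r * (s ^ 2 + b ^ 2) * (s ^ 2 + b' ^ 2))
      ≤ (s * (ε ^ 2 / 2)) / (s * ((1 + s ^ 2) * b' ^ 2)) :=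
        div_le_div₀ (by positivity) hnum (by positivity) hden
    _ = ε ^ 2 / (2 * b' ^ 2) * (1 + s ^ 2)⁻¹ := by
        field_simp


/-- For `b ≥ b' > e` and `ε ∈ (0, 1/2)`,
`K⁻(ε;b,b') = ∫₁^∞ ε²t²(1 - e^{-εt})/(√(1+t²)(ε²t² + b²)(ε²t² + b'²)) dt` satisfies
`|K⁻(ε;b,b') - C₀⁻(b,b')| ≤ C ε² ((log b - log b')/(b² - b'²) + b'^{-2})` for an absolute
constant `C`, where `C₀⁻(b,b') = ∫₀^∞ t(1 - e^{-t})/((t²+b²)(t²+b'²)) dt` and for `b = b'`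
the factor `(log b - log b')/(b² - b'²)` is interpreted as `1/(2b²)`. -/
theorem stmt_10 :
    ∃ C : ℝ, 0 < C ∧ ∀ b b' : ℝ, b' ≤ b → Real.exp 1 < b' → ∀ ε : ℝ, 0 < ε → ε < 1 / 2 →
      |(∫ t in Ioi (1 : ℝ),
          ε ^ 2 * t ^ 2 * (1 - Real.exp (-(ε * t))) /
            (Real.sqrt (1 + t ^ 2) * (ε ^ 2 * t ^ 2 + b ^ 2) * (ε ^ 2 * t ^ 2 + b' ^ 2))) -
        ∫ t in Ioi (0 : ℝ),
          t * (1 - Real.exp (-t)) / ((t ^ 2 + b ^ 2) * (t ^ 2 + b' ^ 2))| ≤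
      C * ε ^ 2 *
        ((if b = b' then 1 / (2 * b ^ 2)
          else (Real.log b - Real.log b') / (b ^ 2 - b' ^ 2)) + 1 / b' ^ 2) := by
  refine ⟨3, by norm_num, ?_⟩
  intro b b' hbb hb' ε hε hε2
  have he1 : (1:ℝ) < Real.exp 1 := by
    have h9 := Real.exp_one_gt_d9; linarith
  have hb'1 : (1:ℝ) < b' := lt_trans he1 hb'
  have hb1 : (1:ℝ) < b := lt_of_lt_of_le hb'1 hbb
  have hb'0 : (0:ℝ) < b' := by linarith
  have hb0 : (0:ℝ) < b := by linarith
  -- the two integrands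
  set g : ℝ → ℝ := fun s =>
    s ^ 2 * (1 - Real.exp (-s)) /
      (Real.sqrt (ε ^ 2 + s ^ 2) * (s ^ 2 + b ^ 2) * (s ^ 2 + b' ^ 2)) with hgdef
  set h : ℝ → ℝ := fun s =>
    s * (1 - Real.exp (-s)) / ((s ^ 2 + b ^ 2) * (s ^ 2 + b' ^ 2)) with hhdef
  -- Step 1 : change of variables s = ε t
  have step1 : (∫ t in Ioi (1 : ℝ),
      ε ^ 2 * t ^ 2 * (1 - Real.exp (-(ε * t))) /
        (Real.sqrt (1 + t ^ 2) * (ε ^ 2 * t ^ 2 + b ^ 2) * (ε ^ 2 * t ^ 2 + b' ^ 2)))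
      = ∫ s in Ioi ε, g s := by
    have hfun : ∀ t : ℝ,
        ε ^ 2 * t ^ 2 * (1 - Real.exp (-(ε * t))) /
          (Real.sqrt (1 + t ^ 2) * (ε ^ 2 * t ^ 2 + b ^ 2) * (ε ^ 2 * t ^ 2 + b' ^ 2))
        = ε • g (ε * t) := by
      intro t
      have hS : Real.sqrt (ε ^ 2 + (ε * t) ^ 2) = ε * Real.sqrt (1 + t ^ 2) := by
        rw [show ε ^ 2 + (ε * t) ^ 2 = ε ^ 2 * (1 + t ^ 2) by ring,
          Real.sqrt_mul (sq_nonneg ε), Real.sqrt_sq hε.le]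
      have hT : (0:ℝ) < Real.sqrt (1 + t ^ 2) := Real.sqrt_pos.mpr (by positivity)
      have hA : (0:ℝ) < ε ^ 2 * t ^ 2 + b ^ 2 := by positivity
      have hB : (0:ℝ) < ε ^ 2 * t ^ 2 + b' ^ 2 := by positivity
      rw [hgdef]
      simp only [smul_eq_mul]
      rw [hS, show (ε * t) ^ 2 = ε ^ 2 * t ^ 2 by ring]
      field_simp
    calc (∫ t in Ioi (1 : ℝ),
        ε ^ 2 * t ^ 2 * (1 - Real.exp (-(ε * t))) /
          (Real.sqrt (1 + t ^ 2) * (ε ^ 2 * t ^ 2 + b ^ 2) * (ε ^ 2 * t ^ 2 + b' ^ 2)))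
        = ∫ t in Ioi (1:ℝ), ε • g (ε * t) :=
          setIntegral_congr_fun measurableSet_Ioi fun t _ => hfun t
      _ = ε • ∫ t in Ioi (1:ℝ), g (ε * t) := integral_smul ε _
      _ = ε • (ε⁻¹ • ∫ s in Ioi (ε * 1), g s) := by
          rw [integral_comp_mul_left_Ioi g 1 hε]
      _ = ∫ s in Ioi ε, g s := by
          rw [smul_smul, mul_inv_cancel₀ hε.ne', one_smul, mul_one]
  -- continuity
  have hcont_h : Continuous h := by
    rw [hhdef]
    apply Continuous.div (by fun_prop) (by fun_prop)
    intro x; positivity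
  have hcont_g : Continuous g := by
    rw [hgdef]
    apply Continuous.div (by fun_prop)
    · exact ((Real.continuous_sqrt.comp (by fun_prop)).mul (by fun_prop)).mul (by fun_prop)
    · intro x
      have : (0:ℝ) < Real.sqrt (ε ^ 2 + x ^ 2) := Real.sqrt_pos.mpr (by positivity)
      positivity
  -- integrability
  have hmaj : Integrable (fun s : ℝ => (1 + s ^ 2)⁻¹) := integrable_inv_one_add_sq
  have hint_h : IntegrableOn h (Ioi (0:ℝ)) := by
    apply Integrable.mono' ((hmaj.restrict (s := Ioi 0))) hcont_h.aestronglyMeasurable.restrict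
    rw [ae_restrict_iff' measurableSet_Ioi]
    filter_upwards with s hs
    rw [Real.norm_eq_abs, abs_of_nonneg (aux_h_nonneg hb0 hb'0 (le_of_lt hs))]
    exact aux_h_le hb1.le hb'1.le hs
  have hint_h_Ioi : IntegrableOn h (Ioi ε) := hint_h.mono_set (Ioi_subset_Ioi hε.le)
  have hint_h_Ioc : IntegrableOn h (Ioc 0 ε) := hint_h.mono_set Ioc_subset_Ioi_self
  have hint_g : IntegrableOn g (Ioi ε) := by
    apply Integrable.mono' ((hmaj.restrict (s := Ioi ε))) hcont_g.aestronglyMeasurable.restrict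
    rw [ae_restrict_iff' measurableSet_Ioi]
    filter_upwards with s hs
    have hs0 : (0:ℝ) < s := lt_trans hε hs
    rw [Real.norm_eq_abs, abs_of_nonneg (aux_g_nonneg hb0 hb'0 hε hs0.le)]
    exact le_trans (aux_g_le_h hb0 hb'0 hε hs0) (aux_h_le hb1.le hb'1.le hs0)
  -- split the second integral
  have hsplit : (∫ s in Ioi (0:ℝ), h s)
      = (∫ s in Ioc 0 ε, h s) + ∫ s in Ioi ε, h s := by
    rw [← setIntegral_union (Ioc_disjoint_Ioi le_rfl) measurableSet_Ioi hint_h_Ioc hint_h_Ioi,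
      Ioc_union_Ioi_eq_Ioi hε.le]
  -- term A : |∫_{Ioi ε} (g - h)| ≤ ε²/b'²
  have hTA : |∫ s in Ioi ε, (g s - h s)| ≤ ε ^ 2 / b' ^ 2 := by
    have h1 : ‖∫ s in Ioi ε, (g s - h s)‖ ≤
        ∫ s in Ioi ε, ε ^ 2 / (2 * b' ^ 2) * (1 + s ^ 2)⁻¹ := by
      apply norm_integral_le_of_norm_le (((hmaj.restrict (s := Ioi ε)).const_mul _))
      rw [ae_restrict_iff' measurableSet_Ioi]
      filter_upwards with s hs
      have hs0 : (0:ℝ) < s := lt_trans hε hs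
      rw [Real.norm_eq_abs, abs_of_nonpos (by linarith [aux_g_le_h hb0 hb'0 hε hs0])]
      linarith [aux_diff_le hb1.le hb'1.le hε hs]
    have h2 : (∫ s in Ioi ε, ε ^ 2 / (2 * b' ^ 2) * (1 + s ^ 2)⁻¹)
        = ε ^ 2 / (2 * b' ^ 2) * (π / 2 - Real.arctan ε) := by
      rw [MeasureTheory.integral_const_mul, integral_Ioi_inv_one_add_sq]
    have h3 : π / 2 - Real.arctan ε ≤ 2 := by
      have : (0:ℝ) ≤ Real.arctan ε := by
        rw [← Real.arctan_zero]
        exact (Real.arctan_strictMono.le_iff_le).mpr hε.le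
      have := Real.pi_le_four
      linarith
    have h4 : (∫ s in Ioi ε, ε ^ 2 / (2 * b' ^ 2) * (1 + s ^ 2)⁻¹) ≤ ε ^ 2 / b' ^ 2 := by
      rw [h2]
      have hc : (0:ℝ) ≤ ε ^ 2 / (2 * b' ^ 2) := by positivity
      calc ε ^ 2 / (2 * b' ^ 2) * (π / 2 - Real.arctan ε)
          ≤ ε ^ 2 / (2 * b' ^ 2) * 2 := mul_le_mul_of_nonneg_left h3 hc
        _ = ε ^ 2 / b' ^ 2 := by ring
    calc |∫ s in Ioi ε, (g s - h s)| = ‖∫ s in Ioi ε, (g s - h s)‖ := (Real.norm_eq_abs _).symm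
      _ ≤ ∫ s in Ioi ε, ε ^ 2 / (2 * b' ^ 2) * (1 + s ^ 2)⁻¹ := h1
      _ ≤ ε ^ 2 / b' ^ 2 := h4
  -- term B : |∫_{Ioc 0 ε} h| ≤ ε³/b'²
  have hTB : |∫ s in Ioc 0 ε, h s| ≤ ε ^ 2 / b' ^ 2 * ε := by
    have hbd : ∀ x ∈ Ioc (0:ℝ) ε, ‖h x‖ ≤ ε ^ 2 / b' ^ 2 := by
      intro x hx
      obtain ⟨hx0, hxε⟩ := hx
      rw [Real.norm_eq_abs, abs_of_nonneg (aux_h_nonneg hb0 hb'0 hx0.le)]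
      have hE := aux_exp0 hx0.le
      have hE1 := aux_exp1 x
      have hnum : x * (1 - Real.exp (-x)) ≤ ε ^ 2 := by nlinarith
      have hb2 : (1:ℝ) ≤ b ^ 2 := by nlinarith
      have hden : b' ^ 2 ≤ (x ^ 2 + b ^ 2) * (x ^ 2 + b' ^ 2) := by
        nlinarith [sq_nonneg x, sq_nonneg (x * x), sq_nonneg (x * b'), sq_nonneg (x * b),
          mul_nonneg (sub_nonneg.mpr hb2) (sq_nonneg b')]
      exact div_le_div₀ (by positivity) hnum (by positivity) hden
    have := norm_setIntegral_le_of_norm_le_const (μ := volume) measure_Ioc_lt_top hbd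
    rw [Real.volume_real_Ioc_of_le (by linarith : (0:ℝ) ≤ ε)] at this
    rw [← Real.norm_eq_abs]
    calc ‖∫ s in Ioc 0 ε, h s‖ ≤ ε ^ 2 / b' ^ 2 * (ε - 0) := this
      _ = ε ^ 2 / b' ^ 2 * ε := by ring
  -- assemble
  have hL : 0 ≤ (if b = b' then 1 / (2 * b ^ 2)
      else (Real.log b - Real.log b') / (b ^ 2 - b' ^ 2)) := by
    split_ifs with hbeq
    · positivity
    · have hlt : b' < b := lt_of_le_of_ne hbb (fun hcontra => hbeq hcontra.symm)
      apply div_nonneg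
      · have := Real.log_le_log hb'0 hbb
        linarith
      · nlinarith
  rw [step1, hsplit]
  have hsub : (∫ s in Ioi ε, g s) - ((∫ s in Ioc 0 ε, h s) + ∫ s in Ioi ε, h s)
      = (∫ s in Ioi ε, (g s - h s)) - ∫ s in Ioc 0 ε, h s := by
    rw [integral_sub hint_g hint_h_Ioi]; ring
  rw [hsub]
  have habs : |(∫ s in Ioi ε, (g s - h s)) - ∫ s in Ioc 0 ε, h s|
      ≤ ε ^ 2 / b' ^ 2 + ε ^ 2 / b' ^ 2 * ε := by
    calc |(∫ s in Ioi ε, (g s - h s)) - ∫ s in Ioc 0 ε, h s|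
        ≤ |∫ s in Ioi ε, (g s - h s)| + |∫ s in Ioc 0 ε, h s| := abs_sub _ _
      _ ≤ ε ^ 2 / b' ^ 2 + ε ^ 2 / b' ^ 2 * ε := add_le_add hTA hTB
  have hfinal : ε ^ 2 / b' ^ 2 + ε ^ 2 / b' ^ 2 * ε ≤
      3 * ε ^ 2 * ((if b = b' then 1 / (2 * b ^ 2)
        else (Real.log b - Real.log b') / (b ^ 2 - b' ^ 2)) + 1 / b' ^ 2) := by
    have h1 : (0:ℝ) ≤ 3 * ε ^ 2 * ((if b = b' then 1 / (2 * b ^ 2)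
        else (Real.log b - Real.log b') / (b ^ 2 - b' ^ 2))) :=
      mul_nonneg (by positivity) hL
    have h2 : ε ^ 2 / b' ^ 2 * ε ≤ ε ^ 2 / b' ^ 2 * 1 := by
      apply mul_le_mul_of_nonneg_left (by linarith) (by positivity)
    have h3 : ε ^ 2 / b' ^ 2 = ε ^ 2 * (1 / b' ^ 2) := by ring
    nlinarith [h1, h2]
  exact le_trans habs hfinal
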